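/- Let (a_n) be a sequence of positive reals with a_n/3 > Σ_{k=n+1}^∞ a_k for all n. For an infinite subset S = {n_1 < n_2 < ...} of ℕ, let T(S) denote the set of tails Σ_{k≥m} a_{n_k}. If two infinite subsets S, S' of ℕ do not eventually coincide (their indicator sequences have different tails), then the corresponding tail-sum sequences differ: there exist tails of the two associated series that are unequal. Consequently, the map sending an infinite subset of ℕ to the tail-equivalence class of its associated subseries is injective on tail-equivalence classes, and there are uncountably many tail-equivalence classes of infinite subsets of ℕ. -/

import Mathlib

/-- Two sequences `u, v` *have the same tail* if they agree from some point on
(up to an index shift). -/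
def SameTail {α : Type*} (u v : ℕ → α) : Prop :=
  ∃ m m' : ℕ, ∀ j : ℕ, u (m + j) = v (m' + j)

/-- The `m`-th tail sum of the subseries of `a` indexed by the (strictly monotone)
sequence `s`. -/
noncomputable def tailSum (a : ℕ → ℝ) (s : ℕ → ℕ) (m : ℕ) : ℝ :=
  ∑' k : ℕ, a (s (m + k))

section Aux

variable {a : ℕ → ℝ} {s s' : ℕ → ℕ}

lemma shift_inj (hs : StrictMono s) (m : ℕ) :
    Function.Injective (fun k => s (m + k)) := fun k1 k2 h => by
  have := hs.injective h; omega

lemma summable_shift (hsum : Summable a) (hs : StrictMono s) (m : ℕ) :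
    Summable (fun k => a (s (m + k))) :=
  hsum.comp_injective (shift_inj hs m)

lemma mono_shift (hs : StrictMono s) (q k : ℕ) : s q + k ≤ s (q + k) := by
  induction k with
  | zero => simp
  | succ k ih => have := hs (show q + k < q + (k + 1) by omega); omega

lemma tail_le (hpos : ∀ n, 0 < a n) (hsum : Summable a) (hs' : StrictMono s')
    (q N : ℕ) (h : ∀ k, N + 1 ≤ s' (q + k)) :
    tailSum a s' q ≤ ∑' k : ℕ, a (N + 1 + k) := by
  apply Summable.tsum_le_tsum_of_inj (fun k => s' (q + k) - (N + 1))
  · intro k1 k2 hk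
    simp only at hk
    have h1 := h k1; have h2 := h k2
    have : s' (q + k1) = s' (q + k2) := by omega
    have := hs'.injective this; omega
  · intro c _; exact (hpos _).le
  · intro b
    have : N + 1 + (s' (q + b) - (N + 1)) = s' (q + b) := by have := h b; omega
    rw [this]
  · exact summable_shift hsum hs' q
  · exact hsum.comp_injective fun x y hxy => by omega

lemma head_le (hpos : ∀ n, 0 < a n) (hsum : Summable a) (hs : StrictMono s) (p : ℕ) :
    a (s p) ≤ tailSum a s p := by
  have := Summable.le_tsum (summable_shift hsum hs p) 0 (fun i _ => (hpos _).le)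
  simpa [tailSum] using this

lemma tail_lt (hpos : ∀ n, 0 < a n) (hsum : Summable a)
    (hdom : ∀ n : ℕ, (∑' k : ℕ, a (n + 1 + k)) < a n / 3)
    (hs : StrictMono s) (hs' : StrictMono s') {p q : ℕ} (h : s p < s' q) :
    tailSum a s' q < tailSum a s p := by
  have h1 : tailSum a s' q ≤ ∑' k : ℕ, a (s p + 1 + k) :=
    tail_le hpos hsum hs' q (s p) (fun k => by have := mono_shift hs' q k; omega)
  have h2 := hdom (s p)
  have h3 := head_le hpos hsum hs p
  have h4 := hpos (s p)
  linarith

lemma head_eq (hpos : ∀ n, 0 < a n) (hsum : Summable a)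
    (hdom : ∀ n : ℕ, (∑' k : ℕ, a (n + 1 + k)) < a n / 3)
    (hs : StrictMono s) (hs' : StrictMono s') {p q : ℕ}
    (h : tailSum a s p = tailSum a s' q) : s p = s' q := by
  rcases lt_trichotomy (s p) (s' q) with hlt | heq | hgt
  · have := tail_lt hpos hsum hdom hs hs' hlt; linarith
  · exact heq
  · have := tail_lt hpos hsum hdom hs' hs hgt; linarith

lemma tailSum_succ (hsum : Summable a) (hs : StrictMono s) (p : ℕ) :
    tailSum a s p = a (s p) + tailSum a s (p + 1) := by
  have h := Summable.tsum_eq_zero_add (summable_shift hsum hs p)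
  have h2 : (∑' n : ℕ, a (s (p + (n + 1)))) = tailSum a s (p + 1) := by
    rw [tailSum]
    apply tsum_congr
    intro k
    have hk : p + (k + 1) = p + 1 + k := by omega
    rw [hk]
  rw [tailSum, h, h2]
  norm_num

lemma key (hpos : ∀ n, 0 < a n) (hsum : Summable a)
    (hdom : ∀ n : ℕ, (∑' k : ℕ, a (n + 1 + k)) < a n / 3)
    (hs : StrictMono s) (hs' : StrictMono s') :
    ∀ j p q : ℕ, tailSum a s p = tailSum a s' q → s (p + j) = s' (q + j) := by
  intro j
  induction j with
  | zero => intro p q h; simpa using head_eq hpos hsum hdom hs hs' h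
  | succ j ih =>
    intro p q h
    have h0 : s p = s' q := head_eq hpos hsum hdom hs hs' h
    have h1 : tailSum a s (p + 1) = tailSum a s' (q + 1) := by
      have hl := tailSum_succ hsum hs p
      have hr := tailSum_succ hsum hs' q
      rw [hl, hr, h0] at h
      linarith
    have := ih (p + 1) (q + 1) h1
    have hp : p + (j + 1) = p + 1 + j := by omega
    have hq : q + (j + 1) = q + 1 + j := by omega
    rw [hp, hq]
    exact this

end Aux

/-- The tail-equivalence setoid on `ℕ → Bool`. -/
instance tailRel : Setoid (ℕ → Bool) where
  r x y := ∃ m : ℕ, ∀ j, m ≤ j → x j = y j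
  iseqv := by
    refine ⟨fun x => ⟨0, fun j _ => rfl⟩, ?_, ?_⟩
    · rintro x y ⟨m, h⟩; exact ⟨m, fun j hj => (h j hj).symm⟩
    · rintro x y z ⟨m, h⟩ ⟨m', h'⟩
      exact ⟨max m m', fun j hj =>
        (h j (le_trans (le_max_left _ _) hj)).trans (h' j (le_trans (le_max_right _ _) hj))⟩

lemma class_countable (x : ℕ → Bool) :
    {y : ℕ → Bool | ∃ m : ℕ, ∀ j, m ≤ j → y j = x j}.Countable := by
  have heq : {y : ℕ → Bool | ∃ m : ℕ, ∀ j, m ≤ j → y j = x j}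
      = ⋃ m : ℕ, {y | ∀ j, m ≤ j → y j = x j} := by
    ext y; simp
  rw [heq]
  apply Set.countable_iUnion
  intro m
  have hinj : Function.Injective
      (fun y : {y : ℕ → Bool // ∀ j, m ≤ j → y j = x j} => (fun i : Fin m => y.1 i.1)) := by
    rintro ⟨y, hy⟩ ⟨z, hz⟩ h
    simp only [Subtype.mk.injEq]
    funext j
    by_cases hj : j < m
    · exact congrFun h ⟨j, hj⟩
    · rw [hy j (by omega), hz j (by omega)]
  have : Finite {y : ℕ → Bool // ∀ j, m ≤ j → y j = x j} := Finite.of_injective _ hinj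
  exact (Set.finite_coe_iff.mp this).countable

lemma not_countable_funBool : ¬ Countable (ℕ → Bool) := by
  intro h
  obtain ⟨g, hg⟩ := exists_surjective_nat (ℕ → Bool)
  obtain ⟨n, hn⟩ := hg (fun k => !(g k k))
  have := congrFun hn n
  simp at this

lemma quot_uncountable : ¬ Countable (Quotient tailRel) := by
  intro h
  have huniv : (Set.univ : Set (ℕ → Bool)).Countable := by
    have hcov : (Set.univ : Set (ℕ → Bool))
        ⊆ ⋃ q : Quotient tailRel, {y | ∃ m : ℕ, ∀ j, m ≤ j → y j = q.out j} := by
      intro y _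
      simp only [Set.mem_iUnion, Set.mem_setOf_eq]
      refine ⟨⟦y⟧, ?_⟩
      exact Setoid.symm (Quotient.mk_out y)
    exact Set.Countable.mono hcov (Set.countable_iUnion fun q => class_countable _)
  exact not_countable_funBool (Set.countable_univ_iff.mp huniv)

/-- Encode a boolean sequence as a strictly monotone sequence. -/
def enc (x : ℕ → Bool) : ℕ → ℕ := fun n => 2 * n + (if x n then 1 else 0)

lemma enc_strictMono (x : ℕ → Bool) : StrictMono (enc x) := by
  apply strictMono_nat_of_lt_succ
  intro n
  unfold enc
  split_ifs <;> omega

lemma enc_injective : Function.Injective enc := by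
  intro x y h
  funext n
  have := congrFun h n
  unfold enc at this
  by_cases hx : x n <;> by_cases hy : y n <;> simp [hx, hy] at this ⊢ <;> omega

lemma sameTail_enc {x y : ℕ → Bool} (h : SameTail (enc x) (enc y)) : tailRel.r x y := by
  obtain ⟨m, m', h⟩ := h
  have hmm : m = m' := by
    have h0 := h 0
    unfold enc at h0
    split_ifs at h0 <;> omega
  subst hmm
  refine ⟨m, fun j hj => ?_⟩
  have hj' := h (j - m)
  have hrw : m + (j - m) = j := by omega
  rw [hrw] at hj'
  unfold enc at hj'
  by_cases hx : x j <;> by_cases hy : y j <;> simp [hx, hy] at hj' ⊢ <;> omega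

theorem tail_sums_distinguish (a : ℕ → ℝ) (hpos : ∀ n, 0 < a n) (hsum : Summable a)
    (hdom : ∀ n : ℕ, (∑' k : ℕ, a (n + 1 + k)) < a n / 3) :
    (∀ s s' : ℕ → ℕ, StrictMono s → StrictMono s' → ¬ SameTail s s' →
      ¬ SameTail (tailSum a s) (tailSum a s')) ∧
    ∃ S : Set (ℕ → ℕ), (∀ s ∈ S, StrictMono s) ∧ ¬ S.Countable ∧
      S.Pairwise fun s s' => ¬ SameTail s s' := by
  constructor
  · intro s s' hs hs' hnst hst
    obtain ⟨m, m', h⟩ := hst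
    have h0 : tailSum a s m = tailSum a s' m' := by simpa using h 0
    exact hnst ⟨m, m', fun j => key hpos hsum hdom hs hs' j m m' h0⟩
  · refine ⟨enc '' Set.range (Quotient.out : Quotient tailRel → ℕ → Bool), ?_, ?_, ?_⟩
    · rintro _ ⟨x, _, rfl⟩; exact enc_strictMono x
    · intro hc
      have hS0 : (Set.range (Quotient.out : Quotient tailRel → ℕ → Bool)).Countable := by
        have := hc.preimage enc_injective
        exact this.mono (by intro y hy; exact Set.mem_preimage.mpr (Set.mem_image_of_mem _ hy))
      have : Countable (Quotient tailRel) := by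
        have h1 : Countable ↥(Set.range (Quotient.out : Quotient tailRel → ℕ → Bool)) := hS0
        exact Countable.of_equiv _ (Equiv.ofInjective _ Quotient.out_injective).symm
      exact quot_uncountable this
    · rintro _ ⟨x, ⟨q, rfl⟩, rfl⟩ _ ⟨y, ⟨q', rfl⟩, rfl⟩ hne hst
      apply hne
      have hr : tailRel.r (Quotient.out q) (Quotient.out q') := sameTail_enc hst
      have : q = q' := by
        have := Quotient.sound hr
        rwa [Quotient.out_eq, Quotient.out_eq] at this
      rw [this]
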